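/- Let G be a tight graph whose complement is disconnected, with co-components G1,...,Gr; let Ti be the set of dense vertices of G lying in Gi and pi the common degree within Gi of the vertices of Ti. Then |Ti| ≥ pi + 1 for every i; and if |Ti| > pi + 1 for some i, then G admits no tight b-colouring. -/

import Mathlib

open SimpleGraph

/-- A proper colouring of `G` given as a function to `ℕ`. -/
def IsProperColoring {V : Type*} (G : SimpleGraph V) (c : V → ℕ) : Prop :=
  ∀ u v, G.Adj u v → c u ≠ c v

/-- A vertex `v` is b-chromatic under `c`: it has a neighbour of every used colour
other than its own. -/
def IsBVertex {V : Type*} (G : SimpleGraph V) (c : V → ℕ) (v : V) : Prop :=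
  ∀ j ∈ Set.range c, j ≠ c v → ∃ u, G.Adj v u ∧ c u = j

/-- A b-colouring: a proper colouring in which every colour class contains a
b-chromatic vertex. -/
def IsBColoring {V : Type*} (G : SimpleGraph V) (c : V → ℕ) : Prop :=
  IsProperColoring G c ∧ ∀ j ∈ Set.range c, ∃ v, c v = j ∧ IsBVertex G c v

/-- The number of colours used by a colouring. -/
noncomputable def numColors {V : Type*} (c : V → ℕ) : ℕ := (Set.range c).ncard

/-- The b-chromatic number: the maximum number of colours in a b-colouring. -/
noncomputable def bChromaticNumber {V : Type*} (G : SimpleGraph V) : ℕ :=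
  sSup {k | ∃ c, IsBColoring G c ∧ numColors c = k}

/-- The m-degree `m(G)`: the largest `k` such that `G` has at least `k` vertices of
degree at least `k - 1`. -/
noncomputable def mDegree {V : Type*} (G : SimpleGraph V) : ℕ :=
  sSup {k | k ≤ {v : V | k ≤ (G.neighborSet v).ncard + 1}.ncard}

/-- The set of dense vertices: those of degree at least `m(G) - 1`. -/
def denseSet {V : Type*} (G : SimpleGraph V) : Set V :=
  {v | mDegree G ≤ (G.neighborSet v).ncard + 1}

/-- A graph is tight if it has exactly `m(G)` dense vertices, each of degree
exactly `m(G) - 1`. -/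
def IsTight {V : Type*} (G : SimpleGraph V) : Prop :=
  (denseSet G).ncard = mDegree G ∧
    ∀ v ∈ denseSet G, (G.neighborSet v).ncard = mDegree G - 1

/-- A fall colouring: a proper colouring in which every vertex has a neighbour of
every used colour other than its own. -/
def IsFallColoring {V : Type*} (G : SimpleGraph V) (c : V → ℕ) : Prop :=
  IsProperColoring G c ∧ ∀ v, ∀ j ∈ Set.range c, j ≠ c v → ∃ u, G.Adj v u ∧ c u = j

/-- The fall spectrum: the set of numbers of colours of fall colourings of `G`. -/
def fallSpectrum {V : Type*} (G : SimpleGraph V) : Set ℕ :=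
  {k | ∃ c, IsFallColoring G c ∧ numColors c = k}

/-- The outer boundary of a vertex set: vertices outside it with a neighbour in it. -/
def outerBoundary {V : Type*} (G : SimpleGraph V) (T : Set V) : Set V :=
  {s | s ∉ T ∧ ∃ t ∈ T, G.Adj s t}

theorem stmt19 {V : Type} [Fintype V] (G : SimpleGraph V) (ht : IsTight G)
    (hdisc : ¬ (Gᶜ).Connected)
    (p : (Gᶜ).ConnectedComponent → ℕ)
    (hp : ∀ K : (Gᶜ).ConnectedComponent, ∀ v ∈ denseSet G ∩ K.supp,
      ((G.neighborSet v) ∩ K.supp).ncard = p K) :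
    (∀ K : (Gᶜ).ConnectedComponent, p K + 1 ≤ (denseSet G ∩ K.supp).ncard) ∧
    ((∃ K : (Gᶜ).ConnectedComponent, p K + 1 < (denseSet G ∩ K.supp).ncard) →
      ¬ ∃ c : V → ℕ, IsBColoring G c ∧ numColors c = mDegree G) := by
  classical
  obtain ⟨hcard, hdeg⟩ := ht
  -- vertices in different co-components are adjacent in G
  have hadj : ∀ (K : (Gᶜ).ConnectedComponent) (u w : V),
      u ∈ K.supp → w ∉ K.supp → G.Adj u w := by
    intro K u w hu hw
    by_contra hna
    have hne : u ≠ w := by rintro rfl; exact hw hu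
    have hc : (Gᶜ).Adj u w := (SimpleGraph.compl_adj G u w).mpr ⟨hne, hna⟩
    have : (Gᶜ).connectedComponentMk w = K := by
      rw [← (SimpleGraph.ConnectedComponent.mem_supp_iff K u).mp hu]
      exact (SimpleGraph.ConnectedComponent.sound hc.reachable).symm
    exact hw ((SimpleGraph.ConnectedComponent.mem_supp_iff K w).mpr this)
  -- the complement of each component's support is in every inside vertex's neighborhood
  have hnbr : ∀ (K : (Gᶜ).ConnectedComponent) (u : V), u ∈ K.supp →
      (K.supp)ᶜ ⊆ G.neighborSet u := by
    intro K u hu w hw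
    exact hadj K u w hu hw
  -- Part 1
  have part1 : ∀ K : (Gᶜ).ConnectedComponent, p K + 1 ≤ (denseSet G ∩ K.supp).ncard := by
    intro K
    obtain ⟨v0, hv0⟩ := Quot.exists_rep K
    have hv0K : v0 ∈ K.supp := (SimpleGraph.ConnectedComponent.mem_supp_iff K v0).mpr hv0
    -- T_K is nonempty
    have hTne : (denseSet G ∩ K.supp).Nonempty := by
      by_contra hT
      rw [Set.not_nonempty_iff_eq_empty] at hT
      have hsub : denseSet G ⊆ (K.supp)ᶜ := by
        intro x hx hxK
        exact absurd (Set.mem_inter hx hxK) (by rw [hT]; exact Set.notMem_empty x)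
      have h1 : mDegree G ≤ ((K.supp)ᶜ : Set V).ncard := by
        rw [← hcard]; exact Set.ncard_le_ncard hsub (Set.toFinite _)
      have h2 : ((K.supp)ᶜ : Set V).ncard ≤ (G.neighborSet v0).ncard :=
        Set.ncard_le_ncard (hnbr K v0 hv0K) (Set.toFinite _)
      have h3 : v0 ∉ denseSet G := by
        intro hx
        exact absurd (Set.mem_inter hx hv0K) (by rw [hT]; exact Set.notMem_empty v0)
      have h4 : ¬ (mDegree G ≤ (G.neighborSet v0).ncard + 1) := h3
      omega
    obtain ⟨v, hv⟩ := hTne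
    have hvd : v ∈ denseSet G := hv.1
    have hpK : ((G.neighborSet v) ∩ K.supp).ncard = p K := hp K v hv
    have hdv : (G.neighborSet v).ncard = mDegree G - 1 := hdeg v hvd
    have hm1 : 1 ≤ mDegree G := by
      rw [← hcard]
      exact (Set.ncard_pos (Set.toFinite _)).mpr ⟨v, hvd⟩
    -- neighbors of v outside K.supp are exactly (K.supp)ᶜ
    have hdiff : (G.neighborSet v) \ K.supp = (K.supp)ᶜ := by
      apply Set.Subset.antisymm
      · intro w hw; exact hw.2
      · intro w hw
        exact ⟨hnbr K v hv.2 hw, hw⟩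
    have hsplit : ((G.neighborSet v) ∩ K.supp).ncard + ((G.neighborSet v) \ K.supp).ncard
        = (G.neighborSet v).ncard :=
      Set.ncard_inter_add_ncard_diff_eq_ncard _ _ (Set.toFinite _)
    have hsplit2 : (denseSet G ∩ K.supp).ncard + (denseSet G \ K.supp).ncard
        = (denseSet G).ncard :=
      Set.ncard_inter_add_ncard_diff_eq_ncard _ _ (Set.toFinite _)
    have hle : (denseSet G \ K.supp).ncard ≤ ((K.supp)ᶜ : Set V).ncard :=
      Set.ncard_le_ncard (fun x hx => hx.2) (Set.toFinite _)
    rw [hdiff] at hsplit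
    omega
  refine ⟨part1, ?_⟩
  rintro ⟨K, hK⟩ ⟨c, ⟨hprop, hb⟩, hnum⟩
  set m := mDegree G with hmdef
  set R : Set ℕ := Set.range c with hR
  have hRfin : R.Finite := Set.finite_range c
  -- every b-vertex is dense
  have hbdense : ∀ v : V, IsBVertex G c v → v ∈ denseSet G := by
    intro v hbv
    have key : (R \ {c v}).ncard ≤ (G.neighborSet v).ncard := by
      have hch : ∀ j ∈ R \ {c v}, ∃ u, G.Adj v u ∧ c u = j := by
        intro j hj
        exact hbv j hj.1 hj.2
      choose g hg1 hg2 using hch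
      classical
      set g' : ℕ → V := fun j => if h : j ∈ R \ {c v} then g j h else v with hg'
      have hmap : ∀ j ∈ R \ {c v}, g' j ∈ G.neighborSet v := by
        intro j hj; simp only [hg', dif_pos hj]; exact hg1 j hj
      have hinj : Set.InjOn g' (R \ {c v}) := by
        intro a ha b hb hab
        have : c (g' a) = c (g' b) := by rw [hab]
        simpa only [hg', dif_pos ha, dif_pos hb, hg2 a ha, hg2 b hb] using this
      exact Set.ncard_le_ncard_of_injOn g' hmap hinj (Set.toFinite _)
    have hcvR : c v ∈ R := ⟨v, rfl⟩
    have : (R \ {c v}).ncard = R.ncard - 1 :=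
      Set.ncard_diff_singleton_of_mem hcvR
    have hRm : R.ncard = m := hnum
    have hm1 : 1 ≤ m := by
      have : 0 < R.ncard := (Set.ncard_pos hRfin).mpr ⟨c v, hcvR⟩
      omega
    show m ≤ (G.neighborSet v).ncard + 1
    omega
  -- choose a b-vertex for each colour
  have hV : Nonempty V := by
    obtain ⟨v0, hv0⟩ := Quot.exists_rep K
    exact ⟨v0⟩
  choose! f hf1 hf2 using hb
  have hfimg : f '' R ⊆ denseSet G := by
    rintro _ ⟨j, hj, rfl⟩
    exact hbdense _ (hf2 j hj)
  have hfinj : Set.InjOn f R := by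
    intro a ha b hb' hab
    rw [← hf1 a ha, ← hf1 b hb', hab]
  have himgcard : (f '' R).ncard = m := by
    rw [Set.ncard_image_of_injOn hfinj]; exact hnum
  have himgeq : f '' R = denseSet G := by
    apply Set.eq_of_subset_of_ncard_le hfimg _ (Set.toFinite _)
    rw [himgcard, hcard]
  -- every dense vertex is a b-vertex, and colours are distinct on dense vertices
  have hdb : ∀ v ∈ denseSet G, IsBVertex G c v := by
    intro v hv
    rw [← himgeq] at hv
    obtain ⟨j, hj, rfl⟩ := hv
    exact hf2 j hj
  have hcinj : Set.InjOn c (denseSet G) := by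
    intro a ha b hb' hab
    rw [← himgeq] at ha hb'
    obtain ⟨ja, hja, rfl⟩ := ha
    obtain ⟨jb, hjb, rfl⟩ := hb'
    rw [hf1 ja hja, hf1 jb hjb] at hab
    rw [hab]
  -- now derive the contradiction
  have hTne : (denseSet G ∩ K.supp).Nonempty := by
    have := part1 K
    exact (Set.ncard_pos (Set.toFinite _)).mp (by omega) |>.elim (fun x hx => ⟨x, hx⟩)
  obtain ⟨v, hv⟩ := hTne
  have hpK : ((G.neighborSet v) ∩ K.supp).ncard = p K := hp K v hv
  -- colours appearing on v's closed neighbourhood inside K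
  set S : Set ℕ := insert (c v) (c '' ((G.neighborSet v) ∩ K.supp)) with hS
  have hScard : S.ncard ≤ p K + 1 := by
    calc S.ncard ≤ (c '' ((G.neighborSet v) ∩ K.supp)).ncard + 1 := Set.ncard_insert_le _ _
    _ ≤ ((G.neighborSet v) ∩ K.supp).ncard + 1 := by
        have := Set.ncard_image_le (s := (G.neighborSet v) ∩ K.supp) (f := c) (Set.toFinite _)
        omega
    _ = p K + 1 := by rw [hpK]
  have hTcard : (c '' (denseSet G ∩ K.supp)).ncard = (denseSet G ∩ K.supp).ncard :=
    Set.ncard_image_of_injOn (hcinj.mono (fun x hx => hx.1))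
  have hnotsub : ¬ (c '' (denseSet G ∩ K.supp) ⊆ S) := by
    intro hsub
    have := Set.ncard_le_ncard hsub (Set.toFinite _)
    omega
  rw [Set.not_subset] at hnotsub
  obtain ⟨x, hxT, hxS⟩ := hnotsub
  obtain ⟨u, hu, rfl⟩ := hxT
  have hcune : c u ≠ c v := fun h => hxS (by rw [h]; exact Set.mem_insert _ _)
  obtain ⟨w, hvw, hcw⟩ := hdb v hv.1 (c u) ⟨u, rfl⟩ hcune
  by_cases hwK : w ∈ K.supp
  · exact hxS (Set.mem_insert_of_mem _ ⟨w, ⟨hvw, hwK⟩, hcw⟩)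
  · have : G.Adj u w := hadj K u w hu.2 hwK
    exact hprop u w this (by rw [hcw])
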